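/- Let p be prime and f: ℤ/pℤ → ℂ. If f vanishes on a set of size at least k and f̂ vanishes on a set of size at least p − k (for some 0 ≤ k ≤ p) with these conditions forcing |supp(f)| + |supp(f̂)| ≤ p, then f = 0. -/

import Mathlib

open MvPolynomial Finset

-- L1: single-coordinate difference divides evaluation difference
lemma aeval_sub_dvd {σ R S : Type*} [CommRing R] [CommRing S] [Algebra R S]
    (P : MvPolynomial σ R) (v w : σ → S) (j : σ) (h : ∀ k, k ≠ j → v k = w k) :
    (v j - w j) ∣ (aeval v P - aeval w P) := by
  induction P using MvPolynomial.induction_on with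
  | C a => simp
  | add P Q hP hQ =>
      have : aeval v (P + Q) - aeval w (P + Q)
          = (aeval v P - aeval w P) + (aeval v Q - aeval w Q) := by
        simp [map_add]; ring
      rw [this]; exact dvd_add hP hQ
  | mul_X P n hP =>
      have key : aeval v (P * X n) - aeval w (P * X n)
          = (aeval v P - aeval w P) * v n + aeval w P * (v n - w n) := by
        simp [map_mul]; ring
      rw [key]
      refine dvd_add (hP.mul_right _) ?_
      rcases eq_or_ne n j with rfl | hne
      · exact Dvd.dvd.mul_left dvd_rfl _
      · rw [h n hne, sub_self, mul_zero]
        exact dvd_zero _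

-- pairs
def dpairs (n : ℕ) : Finset (Σ _ : Fin n, Fin n) :=
  (Finset.univ : Finset (Fin n)).sigma fun i => Finset.Ioi i

lemma mem_dpairs {n : ℕ} {q : Σ _ : Fin n, Fin n} : q ∈ dpairs n ↔ q.1 < q.2 := by
  cases q; simp [dpairs]

-- substitution that kills X j - X i
noncomputable def subst {n : ℕ} (i j : Fin n) :
    MvPolynomial (Fin n) ℤ →ₐ[ℤ] MvPolynomial (Fin n) ℤ :=
  aeval (Function.update X j (X i))

lemma subst_dvd {n : ℕ} (i j : Fin n) (P : MvPolynomial (Fin n) ℤ) :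
    (X j - X i : MvPolynomial (Fin n) ℤ) ∣ P - subst i j P := by
  have h := aeval_sub_dvd (σ := Fin n) (R := ℤ) (S := MvPolynomial (Fin n) ℤ)
    P X (Function.update X j (X i)) j (fun k hk => by simp [Function.update_of_ne hk])
  simpa [subst, Function.update_self, MvPolynomial.aeval_X_left] using h

lemma prime_X_sub_X {n : ℕ} (i j : Fin n) (hij : i ≠ j) :
    Prime (X j - X i : MvPolynomial (Fin n) ℤ) := by
  have hne : (X j - X i : MvPolynomial (Fin n) ℤ) ≠ 0 := by
    intro h
    have := sub_eq_zero.mp h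
    exact hij (MvPolynomial.X_injective this).symm
  rw [← Ideal.span_singleton_prime hne]
  have hker : RingHom.ker (subst i j).toRingHom = Ideal.span {(X j - X i : MvPolynomial (Fin n) ℤ)} := by
    apply le_antisymm
    · intro q hq
      rw [RingHom.mem_ker] at hq
      have hq' : subst i j q = 0 := hq
      have := subst_dvd i j q
      rw [Ideal.mem_span_singleton]
      rw [hq', sub_zero] at this
      exact this
    · rw [Ideal.span_le, Set.singleton_subset_iff]
      simp only [SetLike.mem_coe, RingHom.mem_ker, AlgHom.toRingHom_eq_coe, RingHom.coe_coe]
      simp [subst, Function.update_self, Function.update_of_ne hij]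
  rw [← hker]
  exact RingHom.ker_isPrime _

lemma prod_dvd_of_forall_dvd {R ι : Type*} [CommMonoidWithZero R] (s : Finset ι) (g : ι → R)
    (hprime : ∀ q ∈ s, Prime (g q))
    (hnd : ∀ q ∈ s, ∀ q' ∈ s, q ≠ q' → ¬ (g q ∣ g q'))
    : ∀ (a : R), (∀ q ∈ s, g q ∣ a) → (∏ q ∈ s, g q) ∣ a := by
  induction s using Finset.cons_induction with
  | empty => intro a _; simp
  | cons q₀ s hq₀ ih =>
      intro a hdvd
      obtain ⟨c, hc⟩ := hdvd q₀ (Finset.mem_cons_self _ _)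
      have hdc : ∀ q ∈ s, g q ∣ c := by
        intro q hq
        have h1 : g q ∣ g q₀ * c := hc ▸ hdvd q (Finset.mem_cons_of_mem hq)
        rcases (hprime q (Finset.mem_cons_of_mem hq)).2.2 _ _ h1 with h | h
        · exact absurd h (hnd q (Finset.mem_cons_of_mem hq) q₀ (Finset.mem_cons_self _ _)
            (by rintro rfl; exact hq₀ hq))
        · exact h
      have hsc : (∏ q ∈ s, g q) ∣ c :=
        ih (fun q hq => hprime q (Finset.mem_cons_of_mem hq))
          (fun q hq q' hq' => hnd q (Finset.mem_cons_of_mem hq) q' (Finset.mem_cons_of_mem hq'))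
          c (fun q hq => hdc q hq)
      rw [Finset.prod_cons, hc]
      exact mul_dvd_mul_left _ hsc

-- non-divisibility of distinct variable differences
lemma not_dvd_X_sub_X {n : ℕ} {q q' : Σ _ : Fin n, Fin n}
    (hq : q.1 < q.2) (hq' : q'.1 < q'.2) (hne : q ≠ q') :
    ¬ ((X q.2 - X q.1 : MvPolynomial (Fin n) ℤ) ∣ (X q'.2 - X q'.1)) := by
  obtain ⟨i, j⟩ := q
  obtain ⟨k, l⟩ := q'
  simp only at hq hq' ⊢
  intro hdvd
  have h0 : subst i j ((X l : MvPolynomial (Fin n) ℤ) - X k) = 0 := by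
    have : subst i j ((X j : MvPolynomial (Fin n) ℤ) - X i) = 0 := by
      simp [subst, Function.update_self, Function.update_of_ne hq.ne]
    rcases hdvd with ⟨c, hc⟩
    rw [hc, map_mul, this, zero_mul]
  have heval : (Function.update X j (X i) l : MvPolynomial (Fin n) ℤ)
      = Function.update X j (X i) k := by
    have := sub_eq_zero.mp (by simpa [subst] using h0)
    exact this
  rcases eq_or_ne l j with rfl | hlj
  · rcases eq_or_ne k l with rfl | hkl
    · exact absurd rfl hq'.ne
    · rw [Function.update_self, Function.update_of_ne hkl] at heval
      have : i = k := MvPolynomial.X_injective heval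
      exact hne (by simp [this])
  · rw [Function.update_of_ne hlj] at heval
    rcases eq_or_ne k j with rfl | hkj
    · rw [Function.update_self] at heval
      have : l = i := MvPolynomial.X_injective heval
      omega
    · rw [Function.update_of_ne hkj] at heval
      have : l = k := MvPolynomial.X_injective heval
      omega

-- main factorization
lemma exists_schur (n : ℕ) (a : Fin n → ℕ) :
    ∃ Sc : MvPolynomial (Fin n) ℤ,
      (Matrix.of fun i j : Fin n => (X j : MvPolynomial (Fin n) ℤ) ^ (a i)).det
        = (∏ q ∈ dpairs n, (X q.2 - X q.1)) * Sc := by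
  set P := (Matrix.of fun i j : Fin n => (X j : MvPolynomial (Fin n) ℤ) ^ (a i)).det with hP
  have hdvd : ∀ q ∈ dpairs n, (X q.2 - X q.1 : MvPolynomial (Fin n) ℤ) ∣ P := by
    intro q hq
    have hlt : q.1 < q.2 := mem_dpairs.mp hq
    have hsub : subst q.1 q.2 P = 0 := by
      rw [hP]
      rw [show subst q.1 q.2 (Matrix.of fun i j : Fin n => (X j : MvPolynomial (Fin n) ℤ) ^ (a i)).det
          = ((subst q.1 q.2).toRingHom.mapMatrix
              (Matrix.of fun i j : Fin n => (X j : MvPolynomial (Fin n) ℤ) ^ (a i))).det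
        from RingHom.map_det _ _]
      apply Matrix.det_zero_of_column_eq hlt.ne'
      intro r
      simp [subst, Function.update_self, Function.update_of_ne hlt.ne]
    have := subst_dvd q.1 q.2 P
    simpa [hsub] using this
  have hfac := prod_dvd_of_forall_dvd (dpairs n) (fun q => X q.2 - X q.1)
    (fun q hq => prime_X_sub_X _ _ (mem_dpairs.mp hq).ne)
    (fun q hq q' hq' hne => not_dvd_X_sub_X (mem_dpairs.mp hq) (mem_dpairs.mp hq') hne)
    P
  exact hfac hdvd

-- helper: map the factorization through an aeval
lemma schur_spec {n : ℕ} {S : Type*} [CommRing S] (a : Fin n → ℕ)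
    (Sc : MvPolynomial (Fin n) ℤ)
    (hfac : (Matrix.of fun i j : Fin n => (X j : MvPolynomial (Fin n) ℤ) ^ (a i)).det
        = (∏ q ∈ dpairs n, (X q.2 - X q.1)) * Sc)
    (e : Fin n → S) :
    (Matrix.of fun i j : Fin n => (e j) ^ (a i)).det
      = (∏ q ∈ dpairs n, (e q.2 - e q.1)) * aeval e Sc := by
  have h := congrArg (aeval e) hfac
  rw [show (aeval e) (Matrix.of fun i j : Fin n => (X j : MvPolynomial (Fin n) ℤ) ^ (a i)).det
      = ((aeval e : MvPolynomial (Fin n) ℤ →ₐ[ℤ] S).toRingHom.mapMatrix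
          (Matrix.of fun i j : Fin n => (X j : MvPolynomial (Fin n) ℤ) ^ (a i))).det
    from RingHom.map_det _ _] at h
  rw [map_mul, map_prod] at h
  convert h using 2
  · ext i j
    simp [Matrix.of_apply]
  · apply Finset.prod_congr rfl
    intro q _
    simp

-- geometric factor
lemma pow_sub_pow_factor (u v : ℕ) (h : u < v) :
    (Polynomial.X : Polynomial ℤ) ^ v - Polynomial.X ^ u
      = (Polynomial.X - 1) * (Polynomial.X ^ u * ∑ i ∈ Finset.range (v - u), Polynomial.X ^ i) := by
  have hg := geom_sum_mul (Polynomial.X : Polynomial ℤ) (v - u)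
  have : (Polynomial.X : Polynomial ℤ) ^ u * ((∑ i ∈ Finset.range (v - u), Polynomial.X ^ i)
      * (Polynomial.X - 1)) = Polynomial.X ^ u * (Polynomial.X ^ (v - u) - 1) := by rw [hg]
  calc (Polynomial.X : Polynomial ℤ) ^ v - Polynomial.X ^ u
      = Polynomial.X ^ u * (Polynomial.X ^ (v - u) - 1) := by
        rw [mul_sub, mul_one, ← pow_add]
        congr 2
        omega
    _ = (Polynomial.X - 1) * (Polynomial.X ^ u * ∑ i ∈ Finset.range (v - u), Polynomial.X ^ i) := by
        rw [← this]; ring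

lemma eval_one_geom_factor (u v : ℕ) :
    Polynomial.eval 1 ((Polynomial.X : Polynomial ℤ) ^ u * ∑ i ∈ Finset.range (v - u), Polynomial.X ^ i)
      = ((v - u : ℕ) : ℤ) := by
  simp [Polynomial.eval_finset_sum]

theorem cheb (p : ℕ) (hp : p.Prime) (ζ : ℂ) (hζ : IsPrimitiveRoot ζ p)
    {n : ℕ} (a b : Fin n → ℕ) (ha : StrictMono a) (hb : StrictMono b)
    (hap : ∀ i, a i < p) (hbp : ∀ i, b i < p) :
    (Matrix.of fun i j : Fin n => ζ ^ (a i * b j)).det ≠ 0 := by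
  haveI : Fact p.Prime := ⟨hp⟩
  intro hD0
  obtain ⟨Sc, hfac⟩ := exists_schur n a
  -- specialize at ζ^(b j)
  set e1 : Fin n → ℂ := fun j => ζ ^ (b j) with he1
  have h1 := schur_spec a Sc hfac e1
  have hconv : (Matrix.of fun i j : Fin n => (e1 j) ^ (a i)).det
      = (Matrix.of fun i j : Fin n => ζ ^ (a i * b j)).det := by
    congr 1
    ext i j
    rw [Matrix.of_apply, Matrix.of_apply, he1, mul_comm (a i) (b j), pow_mul]
  rw [hconv, hD0] at h1
  have hVne : (∏ q ∈ dpairs n, (e1 q.2 - e1 q.1)) ≠ 0 := by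
    rw [Finset.prod_ne_zero_iff]
    intro q hq
    have hlt : b q.1 < b q.2 := hb (mem_dpairs.mp hq)
    rw [sub_ne_zero, he1]
    intro heq
    have hz : ζ ^ (b q.1) ≠ 0 := pow_ne_zero _ (hζ.ne_zero hp.ne_zero)
    have : ζ ^ (b q.2 - b q.1) = 1 := by
      have h2 : ζ ^ (b q.1) * ζ ^ (b q.2 - b q.1) = ζ ^ (b q.1) * 1 := by
        rw [mul_one, ← pow_add, show b q.1 + (b q.2 - b q.1) = b q.2 from by omega]
        exact heq
      exact mul_left_cancel₀ hz h2
    exact hζ.pow_ne_one_of_pos_of_lt (by omega) (lt_of_le_of_lt (Nat.sub_le _ _) (hbp _)) this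
  have hSz : aeval e1 Sc = 0 := by
    rcases mul_eq_zero.mp h1.symm with h | h
    · exact absurd h hVne
    · exact h
  -- one-variable polynomial s₁
  set s₁ : Polynomial ℤ := aeval (fun j => (Polynomial.X : Polynomial ℤ) ^ (b j)) Sc with hs₁
  have hcomp : Polynomial.aeval ζ s₁ = aeval e1 Sc := by
    have h := MvPolynomial.comp_aeval (R := ℤ)
      (fun j => (Polynomial.X : Polynomial ℤ) ^ (b j)) (Polynomial.aeval ζ)
    have h2 := congrArg (fun φ => φ Sc) h
    simp only [AlgHom.coe_comp, Function.comp_apply] at h2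
    have hfun : (fun i => (Polynomial.aeval ζ) ((Polynomial.X : Polynomial ℤ) ^ b i)) = e1 :=
      funext fun j => by simp [he1]
    rw [hs₁, h2, hfun]
  have hs1z : Polynomial.aeval ζ s₁ = 0 := by rw [hcomp, hSz]
  have hint : IsIntegral ℤ ζ := hζ.isIntegral hp.pos
  have hdvd : Polynomial.cyclotomic p ℤ ∣ s₁ := by
    rw [Polynomial.cyclotomic_eq_minpoly hζ hp.pos]
    exact minpoly.isIntegrallyClosed_dvd hint hs1z
  set m : ℤ := aeval (fun _ : Fin n => (1 : ℤ)) Sc with hm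
  have heval1 : Polynomial.eval 1 s₁ = m := by
    have h := MvPolynomial.comp_aeval (R := ℤ)
      (fun j => (Polynomial.X : Polynomial ℤ) ^ (b j)) (Polynomial.aeval (1 : ℤ))
    have h2 := congrArg (fun φ => φ Sc) h
    simp only [AlgHom.coe_comp, Function.comp_apply] at h2
    have h3 : Polynomial.aeval (1 : ℤ) s₁ = Polynomial.eval 1 s₁ := by simp
    have hfun : (fun i => (Polynomial.aeval (1:ℤ)) ((Polynomial.X : Polynomial ℤ) ^ b i))
        = (fun _ : Fin n => (1:ℤ)) := funext fun j => by simp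
    rw [← h3, hs₁, h2, hfun, hm]
  have hpm : (p : ℤ) ∣ m := by
    rw [← heval1]
    have := Polynomial.eval_dvd (x := (1:ℤ)) hdvd
    rwa [Polynomial.eval_one_cyclotomic_prime] at this
  -- second specialization at X^(j)
  set e2 : Fin n → Polynomial ℤ := fun j => (Polynomial.X : Polynomial ℤ) ^ (j : ℕ) with he2
  have h2 := schur_spec a Sc hfac e2
  set s₂ : Polynomial ℤ := aeval e2 Sc with hs₂
  have heval2 : Polynomial.eval 1 s₂ = m := by
    have h := MvPolynomial.comp_aeval (R := ℤ) e2 (Polynomial.aeval (1 : ℤ))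
    have h2' := congrArg (fun φ => φ Sc) h
    simp only [AlgHom.coe_comp, Function.comp_apply] at h2'
    have h3 : Polynomial.aeval (1 : ℤ) s₂ = Polynomial.eval 1 s₂ := by simp
    have hfun : (fun i => (Polynomial.aeval (1:ℤ)) (e2 i)) = (fun _ : Fin n => (1:ℤ)) :=
      funext fun j => by simp [he2]
    rw [← h3, hs₂, h2', hfun, hm]
  -- LHS is a Vandermonde determinant
  have hvand : (Matrix.of fun i j : Fin n => (e2 j) ^ (a i)).det
      = ∏ q ∈ dpairs n, ((Polynomial.X : Polynomial ℤ) ^ (a q.2) - Polynomial.X ^ (a q.1)) := by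
    have hmat : (Matrix.of fun i j : Fin n => (e2 j) ^ (a i))
        = Matrix.vandermonde (fun i => (Polynomial.X : Polynomial ℤ) ^ (a i)) := by
      ext i j
      rw [Matrix.of_apply, Matrix.vandermonde, Matrix.of_apply, he2, ← pow_mul, ← pow_mul,
        mul_comm (a i) (j : ℕ)]
    rw [hmat, Matrix.det_vandermonde, dpairs, Finset.prod_sigma]
  -- factor out (X-1)
  set N := (dpairs n).card with hN
  set B : Polynomial ℤ := ∏ q ∈ dpairs n,
    ((Polynomial.X : Polynomial ℤ) ^ (a q.1) * ∑ i ∈ Finset.range (a q.2 - a q.1), Polynomial.X ^ i) with hB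
  set A : Polynomial ℤ := ∏ q ∈ dpairs n,
    ((Polynomial.X : Polynomial ℤ) ^ ((q.1 : Fin n) : ℕ) * ∑ i ∈ Finset.range ((q.2 : ℕ) - (q.1 : ℕ)), Polynomial.X ^ i) with hA
  have hBfac : ∏ q ∈ dpairs n, ((Polynomial.X : Polynomial ℤ) ^ (a q.2) - Polynomial.X ^ (a q.1))
      = (Polynomial.X - 1) ^ N * B := by
    rw [hB, hN, ← Finset.prod_const, ← Finset.prod_mul_distrib]
    apply Finset.prod_congr rfl
    intro q hq
    exact pow_sub_pow_factor _ _ (ha (mem_dpairs.mp hq))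
  have hAfac : ∏ q ∈ dpairs n, (e2 q.2 - e2 q.1)
      = (Polynomial.X - 1) ^ N * A := by
    rw [hA, hN, ← Finset.prod_const, ← Finset.prod_mul_distrib]
    apply Finset.prod_congr rfl
    intro q hq
    rw [he2]
    exact pow_sub_pow_factor _ _ (by exact_mod_cast (mem_dpairs.mp hq))
  rw [hvand, hAfac, hBfac] at h2
  have hXone : ((Polynomial.X : Polynomial ℤ) - 1) ^ N ≠ 0 := by
    apply pow_ne_zero
    simpa using Polynomial.X_sub_C_ne_zero (1 : ℤ)
  have hBA : B = A * s₂ := by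
    apply mul_left_cancel₀ hXone
    rw [h2, mul_assoc]; rfl
  -- evaluate at 1
  have hBval : Polynomial.eval 1 B = ∏ q ∈ dpairs n, ((a q.2 - a q.1 : ℕ) : ℤ) := by
    rw [hB, Polynomial.eval_prod]
    apply Finset.prod_congr rfl
    intro q _
    exact eval_one_geom_factor _ _
  have hpB : (p : ℤ) ∣ Polynomial.eval 1 B := by
    rw [hBA, Polynomial.eval_mul, heval2]
    exact Dvd.dvd.mul_left hpm _
  rw [hBval] at hpB
  have hpB' : p ∣ ∏ q ∈ dpairs n, (a q.2 - a q.1) := by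
    rwa [← Nat.cast_prod, Int.natCast_dvd_natCast] at hpB
  obtain ⟨q, hq, hqd⟩ := (hp.prime.dvd_finset_prod_iff _).mp hpB'
  have hlt : a q.1 < a q.2 := ha (mem_dpairs.mp hq)
  have hpos : 0 < a q.2 - a q.1 := by omega
  have := Nat.le_of_dvd hpos hqd
  have := hap q.2
  omega

lemma sum_orderEmb {M : Type*} [AddCommMonoid M] {s : Finset ℕ} {n : ℕ} (h : s.card = n)
    (g : ℕ → M) : ∑ j : Fin n, g (s.orderEmbOfFin h j) = ∑ m ∈ s, g m := by
  apply Finset.sum_bij (fun (j : Fin n) _ => s.orderEmbOfFin h j)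
  · intro j _; exact Finset.orderEmbOfFin_mem _ _ _
  · intro i _ j _ hij; exact (s.orderEmbOfFin h).injective hij
  · intro m hm
    have hr : m ∈ Set.range (s.orderEmbOfFin h) := by
      rw [Finset.range_orderEmbOfFin]; exact hm
    obtain ⟨j, hj⟩ := hr
    exact ⟨j, Finset.mem_univ _, hj⟩
  · intro j _; rfl

open Complex

noncomputable def dft {p : ℕ} [NeZero p] (f : ZMod p → ℂ) (ξ : ZMod p) : ℂ :=
  (p : ℂ)⁻¹ * ∑ x : ZMod p, f x * Complex.exp (-2 * Real.pi * Complex.I * ((x.val : ℂ) * (ξ.val : ℂ)) / p)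

theorem vanishing_forces_zero
    (p k : ℕ) (hp : p.Prime) [NeZero p] (hk : k ≤ p)
    (f : ZMod p → ℂ) (S T : Set (ZMod p))
    (hS : S.ncard ≥ k) (hT : T.ncard ≥ p - k)
    (hfS : ∀ x ∈ S, f x = 0) (hfT : ∀ ξ ∈ T, dft f ξ = 0) :
    f = 0 := by
  classical
  set ζ : ℂ := Complex.exp (-2 * Real.pi * Complex.I / p) with hζdef
  have hζ : IsPrimitiveRoot ζ p := by
    have h := Complex.isPrimitiveRoot_exp p (NeZero.ne p)
    have he : ζ = (Complex.exp (2 * Real.pi * Complex.I / p))⁻¹ := by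
      rw [hζdef, ← Complex.exp_neg]
      congr 1
      ring
    rw [he]
    exact h.inv
  have hp0 : (p : ℂ) ≠ 0 := Nat.cast_ne_zero.mpr (NeZero.ne p)
  have hsum : ∀ ξ ∈ T, ∑ x : ZMod p, f x * ζ ^ (x.val * ξ.val) = 0 := by
    intro ξ hξ
    have h := hfT ξ hξ
    rw [dft] at h
    have hterm : ∀ x : ZMod p,
        Complex.exp (-2 * Real.pi * Complex.I * ((x.val : ℂ) * (ξ.val : ℂ)) / p)
          = ζ ^ (x.val * ξ.val) := by
      intro x
      rw [hζdef, ← Complex.exp_nat_mul]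
      congr 1
      push_cast
      ring
    rcases mul_eq_zero.mp h with h' | h'
    · exact absurd h' (inv_ne_zero hp0)
    · rw [← h']
      apply Finset.sum_congr rfl
      intro x _
      rw [hterm]
  set A : Finset (ZMod p) := Finset.univ.filter (fun x => f x ≠ 0) with hA
  set n := A.card with hn
  have hnp : n ≤ p := by
    have h2 : (Finset.univ : Finset (ZMod p)).card = p := by
      rw [Finset.card_univ]; exact ZMod.card p
    exact le_trans (Finset.card_le_univ A) (le_of_eq h2)
  have hScompl : S ⊆ (↑(Aᶜ) : Set (ZMod p)) := by
    intro x hx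
    simp only [Finset.coe_compl, Set.mem_compl_iff, Finset.mem_coe, hA]
    simp only [Finset.mem_filter, Finset.mem_univ, true_and]
    intro hne
    exact hne (hfS x hx)
  have hcard1 : k ≤ p - n := by
    have h1 : S.ncard ≤ (↑(Aᶜ) : Set (ZMod p)).ncard := Set.ncard_le_ncard hScompl (Set.toFinite _)
    rw [Set.ncard_coe_finset, Finset.card_compl, ZMod.card] at h1
    omega
  have hTfin : T.Finite := Set.toFinite T
  have hTcard : T.ncard = hTfin.toFinset.card := Set.ncard_eq_toFinset_card T hTfin
  obtain ⟨T', hT'sub, hT'card⟩ := Finset.exists_subset_card_eq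
    (show n ≤ hTfin.toFinset.card by omega)
  set Av := A.image ZMod.val with hAv
  have hAvcard : Av.card = n := Finset.card_image_of_injective _ (ZMod.val_injective p)
  set Bv := T'.image ZMod.val with hBv
  have hBvcard : Bv.card = n := by
    rw [hBv, Finset.card_image_of_injective _ (ZMod.val_injective p), hT'card]
  set a : Fin n → ℕ := fun j => Av.orderEmbOfFin hAvcard j with ha
  set b : Fin n → ℕ := fun i => Bv.orderEmbOfFin hBvcard i with hb
  have hamem : ∀ j, a j ∈ Av := fun j => Finset.orderEmbOfFin_mem _ _ _
  have hbmem : ∀ i, b i ∈ Bv := fun i => Finset.orderEmbOfFin_mem _ _ _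
  have hap : ∀ j, a j < p := by
    intro j
    obtain ⟨y, _, hy⟩ := Finset.mem_image.mp (hamem j)
    rw [← hy]
    exact ZMod.val_lt y
  have hbp : ∀ i, b i < p := by
    intro i
    obtain ⟨y, _, hy⟩ := Finset.mem_image.mp (hbmem i)
    rw [← hy]
    exact ZMod.val_lt y
  have hdet := cheb p hp ζ hζ b a (Bv.orderEmbOfFin hBvcard).strictMono
    (Av.orderEmbOfFin hAvcard).strictMono hbp hap
  set M : Matrix (Fin n) (Fin n) ℂ := Matrix.of fun i j => ζ ^ (b i * a j) with hM
  set v : Fin n → ℂ := fun j => f ((a j : ℕ) : ZMod p) with hv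
  have hMv : M.mulVec v = 0 := by
    funext i
    set ξ : ZMod p := ((b i : ℕ) : ZMod p) with hξ
    have hξval : ξ.val = b i := ZMod.val_natCast_of_lt (hbp i)
    have hξT : ξ ∈ T := by
      obtain ⟨y, hyT', hy⟩ := Finset.mem_image.mp (hbmem i)
      have hξy : ξ = y := by rw [hξ, ← hy]; exact ZMod.natCast_rightInverse y
      rw [hξy]
      exact (Set.Finite.mem_toFinset hTfin).mp (hT'sub hyT')
    have hs := hsum ξ hξT
    have hrestrict : ∑ x : ZMod p, f x * ζ ^ (x.val * ξ.val)
        = ∑ x ∈ A, f x * ζ ^ (x.val * ξ.val) := by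
      symm
      apply Finset.sum_subset (Finset.subset_univ _)
      intro x _ hx
      have hfx : f x = 0 := by
        by_contra hfx
        exact hx (Finset.mem_filter.mpr ⟨Finset.mem_univ _, hfx⟩)
      rw [hfx, zero_mul]
    have himg : ∑ x ∈ A, f x * ζ ^ (x.val * ξ.val)
        = ∑ m ∈ Av, f ((m : ℕ) : ZMod p) * ζ ^ (m * ξ.val) := by
      rw [hAv, Finset.sum_image (fun x _ y _ hxy => ZMod.val_injective p hxy)]
      apply Finset.sum_congr rfl
      intro x _
      rw [ZMod.natCast_rightInverse x]
    have hfin : ∑ j : Fin n, f ((a j : ℕ) : ZMod p) * ζ ^ (a j * ξ.val)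
        = ∑ m ∈ Av, f ((m : ℕ) : ZMod p) * ζ ^ (m * ξ.val) :=
      sum_orderEmb hAvcard (fun m => f ((m : ℕ) : ZMod p) * ζ ^ (m * ξ.val))
    have hstep : M.mulVec v i = ∑ j : Fin n, f ((a j : ℕ) : ZMod p) * ζ ^ (a j * ξ.val) := by
      simp only [Matrix.mulVec, dotProduct, hM, Matrix.of_apply, hv]
      apply Finset.sum_congr rfl
      intro j _
      rw [hξval, mul_comm (a j) (b i)]
      exact mul_comm _ _
    rw [Pi.zero_apply, hstep, hfin, ← himg, ← hrestrict]
    exact hs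
  have hv0 : v = 0 := Matrix.eq_zero_of_mulVec_eq_zero hdet hMv
  funext x
  simp only [Pi.zero_apply]
  by_contra hx
  have hxA : x ∈ A := Finset.mem_filter.mpr ⟨Finset.mem_univ _, hx⟩
  have hxv : x.val ∈ Av := Finset.mem_image_of_mem _ hxA
  have hr : x.val ∈ Set.range (Av.orderEmbOfFin hAvcard) := by
    rw [Finset.range_orderEmbOfFin]
    exact hxv
  obtain ⟨j, hj⟩ := hr
  have hfx : f x = v j := by
    have h1 : a j = x.val := hj
    have hcast : ((a j : ℕ) : ZMod p) = x := by
      rw [h1]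
      exact ZMod.natCast_rightInverse x
    exact (congrArg f hcast).symm
  rw [hfx, hv0, Pi.zero_apply] at hx
  exact hx rfl
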